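/- Under the completely randomized 2² factorial design with N ≥ 2, for each l ∈ {1,2,3} the sampling variance of the randomization-based estimator equals Var(τ̂_l) = (1/4) Σ_{j=1}^4 S_j² / n_j − S²(τ̄_l)/N, where S_j² = (N/(N−1)) p_j (1 − p_j) and the variance is taken over the uniform distribution on all treatment assignments with the prescribed group sizes n_1, n_2, n_3, n_4. -/

import Mathlib

open Finset

/-- Contrast vectors of the 2^2 design: rows are h_1, h_2, h_3. -/
def H : Fin 3 → Fin 4 → ℤ :=
  ![![-1, -1, 1, 1], ![-1, 1, -1, 1], ![1, -1, -1, 1]]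

/-- N_j : number of units with Y_i(z_j) = 1. -/
def cnt1 {N : ℕ} (Y : Fin N → Fin 4 → ℕ) (j : Fin 4) : ℕ :=
  (univ.filter fun i => Y i j = 1).card

/-- N_{jj'} : number of units with Y_i(z_j) = Y_i(z_{j'}) = 1. -/
def cnt2 {N : ℕ} (Y : Fin N → Fin 4 → ℕ) (j j' : Fin 4) : ℕ :=
  (univ.filter fun i => Y i j = 1 ∧ Y i j' = 1).card

/-- N_{j j' j''} : triple-intersection counts. -/
def cnt3 {N : ℕ} (Y : Fin N → Fin 4 → ℕ) (j j' j'' : Fin 4) : ℕ :=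
  (univ.filter fun i => Y i j = 1 ∧ Y i j' = 1 ∧ Y i j'' = 1).card

/-- N_{1234} : quadruple-intersection count. -/
def cnt4 {N : ℕ} (Y : Fin N → Fin 4 → ℕ) : ℕ :=
  (univ.filter fun i => Y i 0 = 1 ∧ Y i 1 = 1 ∧ Y i 2 = 1 ∧ Y i 3 = 1).card

/-- Individual factorial effect τ_{il} = (1/2) h_l' Y_i. -/
noncomputable def tauInd {N : ℕ} (Y : Fin N → Fin 4 → ℕ) (l : Fin 3) (i : Fin N) : ℝ :=
  (1 / 2) * ∑ j, (H l j : ℝ) * (Y i j : ℝ)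

/-- Population factorial effect τ̄_l = (1/2) h_l' p, with p_j = N_j / N. -/
noncomputable def taubar {N : ℕ} (Y : Fin N → Fin 4 → ℕ) (l : Fin 3) : ℝ :=
  (1 / 2) * ∑ j, (H l j : ℝ) * ((cnt1 Y j : ℝ) / N)

/-- Variance of the individual factorial effects
    S²(τ̄_l) = (1/(N-1)) Σ_i (τ_{il} - τ̄_l)². -/
noncomputable def S2 {N : ℕ} (Y : Fin N → Fin 4 → ℕ) (l : Fin 3) : ℝ :=
  (1 / ((N : ℝ) - 1)) * ∑ i, (tauInd Y l i - taubar Y l) ^ 2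

/-- J_{l+} = {j : h_{lj} = 1}. -/
def Jplus (l : Fin 3) : Finset (Fin 4) := univ.filter fun j => H l j = 1

/-- J_{l-} = {j : h_{lj} = -1}. -/
def Jminus (l : Fin 3) : Finset (Fin 4) := univ.filter fun j => H l j = -1

/-- All treatment assignments W : {1,…,N} → {1,2,3,4} with #W⁻¹(j) = n_j. -/
def assignments (N : ℕ) (n : Fin 4 → ℕ) : Finset (Fin N → Fin 4) :=
  univ.filter fun W => ∀ j, (univ.filter fun i => W i = j).card = n j

/-- Expectation over the uniform distribution on all assignments. -/
noncomputable def expec {N : ℕ} (n : Fin 4 → ℕ) (f : (Fin N → Fin 4) → ℝ) : ℝ :=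
  (∑ W ∈ assignments N n, f W) / (assignments N n).card

/-- p̂_j = (1/n_j) Σ_{i : W(i) = j} Y_i(z_j). -/
noncomputable def phat {N : ℕ} (Y : Fin N → Fin 4 → ℕ) (n : Fin 4 → ℕ)
    (W : Fin N → Fin 4) (j : Fin 4) : ℝ :=
  (∑ i ∈ univ.filter (fun i => W i = j), (Y i j : ℝ)) / n j

/-- Randomization-based estimator τ̂_l = (1/2) h_l' p̂. -/
noncomputable def tauhat {N : ℕ} (Y : Fin N → Fin 4 → ℕ) (n : Fin 4 → ℕ)
    (l : Fin 3) (W : Fin N → Fin 4) : ℝ :=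
  (1 / 2) * ∑ j, (H l j : ℝ) * phat Y n W j

lemma mem_assign {N : ℕ} {n : Fin 4 → ℕ} {W : Fin N → Fin 4} :
    W ∈ assignments N n ↔ ∀ j, (univ.filter fun i => W i = j).card = n j := by
  simp [assignments]

lemma assign_nonempty (N : ℕ) (n : Fin 4 → ℕ) (hsum : ∑ j, n j = N) :
    (assignments N n).Nonempty := by
  have hcard : (univ : Finset (Fin N)).card = n 0 + n 1 + n 2 + n 3 := by
    rw [card_univ, Fintype.card_fin]
    simp [Fin.sum_univ_four] at hsum; omega
  obtain ⟨s0, hs0sub, hs0⟩ := exists_subset_card_eq (s := (univ : Finset (Fin N))) (n := n 0)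
    (by omega)
  obtain ⟨s1, hs1sub, hs1⟩ := exists_subset_card_eq (s := (univ : Finset (Fin N)) \ s0) (n := n 1)
    (by rw [card_sdiff_of_subset (by simp), hcard, hs0]; omega)
  obtain ⟨s2, hs2sub, hs2⟩ := exists_subset_card_eq (s := ((univ : Finset (Fin N)) \ s0) \ s1)
    (n := n 2)
    (by rw [card_sdiff_of_subset hs1sub, card_sdiff_of_subset (by simp), hcard, hs0, hs1]; omega)
  set s3 : Finset (Fin N) := (((univ : Finset (Fin N)) \ s0) \ s1) \ s2 with hs3def
  have hs3 : s3.card = n 3 := by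
    rw [hs3def, card_sdiff_of_subset hs2sub, card_sdiff_of_subset hs1sub, card_sdiff_of_subset (by simp), hcard, hs0, hs1, hs2]
    omega
  have h10 : ∀ i ∈ s1, i ∉ s0 := fun i hi => (mem_sdiff.1 (hs1sub hi)).2
  have h20 : ∀ i ∈ s2, i ∉ s0 := fun i hi => (mem_sdiff.1 (mem_sdiff.1 (hs2sub hi)).1).2
  have h21 : ∀ i ∈ s2, i ∉ s1 := fun i hi => (mem_sdiff.1 (hs2sub hi)).2
  set W : Fin N → Fin 4 := fun i => if i ∈ s0 then 0 else if i ∈ s1 then 1 else if i ∈ s2 then 2 else 3 with hW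
  have e0 : (univ.filter fun i => W i = (0 : Fin 4)) = s0 := by
    ext i; simp only [mem_filter, mem_univ, true_and, hW]
    split_ifs with h0 h1 h2
    · exact iff_of_true rfl h0
    · exact iff_of_false (by decide) (h10 i h1)
    · exact iff_of_false (by decide) (h20 i h2)
    · exact iff_of_false (by decide) h0
  have e1 : (univ.filter fun i => W i = (1 : Fin 4)) = s1 := by
    ext i; simp only [mem_filter, mem_univ, true_and, hW]
    split_ifs with h0 h1 h2
    · exact iff_of_false (by decide) (fun h => h10 i h h0)
    · exact iff_of_true rfl h1
    · exact iff_of_false (by decide) (h21 i h2)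
    · exact iff_of_false (by decide) h1
  have e2 : (univ.filter fun i => W i = (2 : Fin 4)) = s2 := by
    ext i; simp only [mem_filter, mem_univ, true_and, hW]
    split_ifs with h0 h1 h2
    · exact iff_of_false (by decide) (fun h => h20 i h h0)
    · exact iff_of_false (by decide) (fun h => h21 i h h1)
    · exact iff_of_true rfl h2
    · exact iff_of_false (by decide) h2
  have e3 : (univ.filter fun i => W i = (3 : Fin 4)) = s3 := by
    ext i; simp only [mem_filter, mem_univ, true_and, hW]
    split_ifs with h0 h1 h2
    · exact iff_of_false (by decide) (by simp [hs3def, h0])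
    · exact iff_of_false (by decide) (by simp [hs3def, h1])
    · exact iff_of_false (by decide) (by simp [hs3def, h2])
    · exact iff_of_true rfl (by simp [hs3def, h0, h1, h2])
  refine ⟨W, mem_assign.2 fun j => ?_⟩
  fin_cases j
  · show (univ.filter fun i => W i = (0 : Fin 4)).card = n 0; rw [e0, hs0]
  · show (univ.filter fun i => W i = (1 : Fin 4)).card = n 1; rw [e1, hs1]
  · show (univ.filter fun i => W i = (2 : Fin 4)).card = n 2; rw [e2, hs2]
  · show (univ.filter fun i => W i = (3 : Fin 4)).card = n 3; rw [e3, hs3]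

lemma comp_mem_assign {N : ℕ} {n : Fin 4 → ℕ} (σ : Equiv.Perm (Fin N))
    {W : Fin N → Fin 4} (hW : W ∈ assignments N n) : (W ∘ σ) ∈ assignments N n := by
  rw [mem_assign] at hW ⊢
  intro j
  rw [← hW j]
  apply Finset.card_bij (fun i _ => σ i)
  · intro a ha; simp only [mem_filter, mem_univ, true_and] at ha ⊢; exact ha
  · intro a _ b _ h; exact σ.injective h
  · intro b hb
    refine ⟨σ.symm b, ?_, by simp⟩
    simp only [mem_filter, mem_univ, true_and, Function.comp_apply, Equiv.apply_symm_apply] at hb ⊢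
    exact hb

lemma sum_comp_assign {N : ℕ} {n : Fin 4 → ℕ} (σ : Equiv.Perm (Fin N))
    (F : (Fin N → Fin 4) → ℝ) :
    ∑ W ∈ assignments N n, F (W ∘ σ) = ∑ W ∈ assignments N n, F W := by
  apply Finset.sum_nbij' (i := fun W => W ∘ ⇑σ) (j := fun W => W ∘ ⇑σ.symm)
  · intro W hW; exact comp_mem_assign σ hW
  · intro W hW; exact comp_mem_assign σ.symm hW
  · intro W _; funext i; simp
  · intro W _; funext i; simp
  · intro W _; rfl

noncomputable def Ind {N : ℕ} (W : Fin N → Fin 4) (i : Fin N) (j : Fin 4) : ℝ :=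
  if W i = j then 1 else 0

lemma sum_Ind {N : ℕ} {n : Fin 4 → ℕ} {W : Fin N → Fin 4} (hW : W ∈ assignments N n)
    (j : Fin 4) : ∑ i, Ind W i j = (n j : ℝ) := by
  rw [mem_assign] at hW
  rw [← hW j]
  simp [Ind, Finset.sum_boole]

lemma mom1_const {N : ℕ} {n : Fin 4 → ℕ} (i i' : Fin N) (j : Fin 4) :
    ∑ W ∈ assignments N n, Ind W i j = ∑ W ∈ assignments N n, Ind W i' j := by
  have := sum_comp_assign (n := n) (Equiv.swap i i') (fun W => Ind W i j)
  rw [← this]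
  apply Finset.sum_congr rfl
  intro W _
  simp [Ind, Function.comp, Equiv.swap_apply_left]

lemma mom1 {N : ℕ} {n : Fin 4 → ℕ} (hN : 0 < N) (i : Fin N) (j : Fin 4) :
    ∑ W ∈ assignments N n, Ind W i j
      = (n j : ℝ) * (assignments N n).card / N := by
  have hNne : (N : ℝ) ≠ 0 := Nat.cast_ne_zero.2 hN.ne'
  have key : (N : ℝ) * ∑ W ∈ assignments N n, Ind W i j
      = (n j : ℝ) * (assignments N n).card := by
    calc (N : ℝ) * ∑ W ∈ assignments N n, Ind W i j
        = ∑ i' : Fin N, ∑ W ∈ assignments N n, Ind W i' j := by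
          rw [Finset.sum_congr rfl (fun i' _ => (mom1_const i' i j))]
          simp [mul_comm]
      _ = ∑ W ∈ assignments N n, ∑ i' : Fin N, Ind W i' j := Finset.sum_comm
      _ = ∑ W ∈ assignments N n, (n j : ℝ) := by
          exact Finset.sum_congr rfl (fun W hW => sum_Ind hW j)
      _ = (n j : ℝ) * (assignments N n).card := by simp [mul_comm]
  field_simp
  linarith [key]

lemma exists_perm_pair {N : ℕ} {i0 i1 i i' : Fin N} (h01 : i0 ≠ i1) (h : i ≠ i') :
    ∃ σ : Equiv.Perm (Fin N), σ i0 = i ∧ σ i1 = i' := by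
  refine ⟨(Equiv.swap i0 i).trans (Equiv.swap (Equiv.swap i0 i i1) i'), ?_, ?_⟩
  · simp only [Equiv.trans_apply, Equiv.swap_apply_left]
    apply Equiv.swap_apply_of_ne_of_ne
    · intro hc
      have h2 : Equiv.swap i0 i i = Equiv.swap i0 i (Equiv.swap i0 i i1) := congrArg _ hc
      rw [Equiv.swap_apply_right, Equiv.swap_apply_self] at h2
      exact h01 h2
    · exact h
  · simp only [Equiv.trans_apply, Equiv.swap_apply_left]

lemma mom2_const {N : ℕ} {n : Fin 4 → ℕ} {i i' a b : Fin N} (hii : i ≠ i')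
    (hab : a ≠ b) (j j' : Fin 4) :
    ∑ W ∈ assignments N n, Ind W a j * Ind W b j'
      = ∑ W ∈ assignments N n, Ind W i j * Ind W i' j' := by
  obtain ⟨σ, h1, h2⟩ := exists_perm_pair hab hii
  have := sum_comp_assign (n := n) σ (fun W => Ind W a j * Ind W b j')
  rw [← this]
  apply Finset.sum_congr rfl
  intro W _
  simp [Ind, Function.comp, h1, h2]

lemma Ind_mul_self {N : ℕ} (W : Fin N → Fin 4) (a : Fin N) (j j' : Fin 4) :
    Ind W a j * Ind W a j' = if j = j' then Ind W a j else 0 := by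
  unfold Ind
  split_ifs <;> simp_all

lemma mom2 {N : ℕ} {n : Fin 4 → ℕ} (hN : 2 ≤ N) {i i' : Fin N} (hii : i ≠ i') (j j' : Fin 4) :
    ∑ W ∈ assignments N n, Ind W i j * Ind W i' j'
      = (n j : ℝ) * ((n j' : ℝ) - if j = j' then 1 else 0) * (assignments N n).card
          / ((N : ℝ) * ((N : ℝ) - 1)) := by
  set A := assignments N n with hA
  set t := ∑ W ∈ A, Ind W i j * Ind W i' j' with ht
  set T : Fin N → Fin N → ℝ := fun a b => ∑ W ∈ A, Ind W a j * Ind W b j' with hT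
  have htot : ∑ a : Fin N, ∑ b : Fin N, T a b = (n j : ℝ) * (n j' : ℝ) * A.card := by
    calc ∑ a : Fin N, ∑ b : Fin N, T a b
        = ∑ W ∈ A, ∑ a : Fin N, (Ind W a j * ∑ b : Fin N, Ind W b j') := by
          rw [Finset.sum_congr rfl fun a (_ : a ∈ univ) => (by
            rw [Finset.sum_comm]
            exact Finset.sum_congr rfl fun W _ => by rw [Finset.mul_sum] :
              ∑ b : Fin N, T a b = ∑ W ∈ A, Ind W a j * ∑ b : Fin N, Ind W b j'),
            Finset.sum_comm]
      _ = ∑ W ∈ A, (∑ a : Fin N, Ind W a j) * (∑ b : Fin N, Ind W b j') :=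
          Finset.sum_congr rfl fun W _ => (Finset.sum_mul _ _ _).symm
      _ = ∑ W ∈ A, (n j : ℝ) * (n j' : ℝ) :=
          Finset.sum_congr rfl fun W hW => by rw [sum_Ind hW, sum_Ind hW]
      _ = (n j : ℝ) * (n j' : ℝ) * A.card := by rw [Finset.sum_const, nsmul_eq_mul]; ring
  have hdiag : ∑ a : Fin N, T a a = (if j = j' then (n j : ℝ) else 0) * A.card := by
    calc ∑ a : Fin N, T a a
        = ∑ a : Fin N, ∑ W ∈ A, (if j = j' then Ind W a j else 0) :=
          Finset.sum_congr rfl fun a _ =>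
            Finset.sum_congr rfl fun W _ => Ind_mul_self W a j j'
      _ = ∑ W ∈ A, ∑ a : Fin N, (if j = j' then Ind W a j else 0) := Finset.sum_comm
      _ = ∑ W ∈ A, (if j = j' then (n j : ℝ) else 0) := by
          refine Finset.sum_congr rfl fun W hW => ?_
          split_ifs with hjj
          · exact sum_Ind hW j
          · simp
      _ = (if j = j' then (n j : ℝ) else 0) * A.card := by
          rw [Finset.sum_const, nsmul_eq_mul]; ring
  have hoff : ∀ a : Fin N, ∑ b ∈ univ.erase a, T a b = ((N : ℝ) - 1) * t := by
    intro a
    rw [Finset.sum_congr rfl (fun b hb => mom2_const hii (Finset.ne_of_mem_erase hb).symm j j')]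
    rw [Finset.sum_const, Finset.card_erase_of_mem (mem_univ a), card_univ, Fintype.card_fin,
      nsmul_eq_mul]
    rw [Nat.cast_sub (by omega)]
    norm_num
    exact Or.inl rfl
  have hsplit : ∑ a : Fin N, ∑ b : Fin N, T a b
      = ∑ a : Fin N, T a a + (N : ℝ) * (((N : ℝ) - 1) * t) := by
    have key : ∀ a : Fin N, ∑ b : Fin N, T a b = T a a + ((N : ℝ) - 1) * t := by
      intro a
      rw [← Finset.add_sum_erase univ (T a) (mem_univ a), hoff a]
    rw [Finset.sum_congr rfl fun a _ => key a, Finset.sum_add_distrib, Finset.sum_const,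
      card_univ, Fintype.card_fin, nsmul_eq_mul]
  have hN1 : (N : ℝ) - 1 ≠ 0 := by
    have : (2 : ℝ) ≤ (N : ℝ) := by exact_mod_cast hN
    linarith
  have hNne : (N : ℝ) ≠ 0 := by positivity
  rw [htot, hdiag] at hsplit
  rw [ht]
  field_simp
  split_ifs at hsplit ⊢ with hjj <;> nlinarith [hsplit]

section helpers
variable {N : ℕ}

lemma sum_if_diag (g : Fin N → Fin N → ℝ) (D E : ℝ) :
    ∑ i : Fin N, ∑ i' : Fin N, g i i' * (if i = i' then D else E)
      = (∑ i : Fin N, ∑ i' : Fin N, g i i') * E + (∑ i : Fin N, g i i) * (D - E) := by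
  have key : ∀ i : Fin N, ∑ i' : Fin N, g i i' * (if i = i' then D else E)
      = (∑ i' : Fin N, g i i') * E + g i i * (D - E) := by
    intro i
    have : ∀ i' : Fin N, g i i' * (if i = i' then D else E)
        = g i i' * E + (if i = i' then g i i' * (D - E) else 0) := by
      intro i'; split_ifs <;> ring
    rw [Finset.sum_congr rfl fun i' _ => this i', Finset.sum_add_distrib,
      Finset.sum_ite_eq univ i (fun i' => g i i' * (D - E)), ← Finset.sum_mul]
    simp
  rw [Finset.sum_congr rfl fun i _ => key i, Finset.sum_add_distrib, ← Finset.sum_mul,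
    ← Finset.sum_mul]

end helpers


set_option maxHeartbeats 2000000 in
theorem stmt14 (N : ℕ) (hN : 2 ≤ N) (n : Fin 4 → ℕ) (hn : ∀ j, 1 ≤ n j)
    (hsum : ∑ j, n j = N) (l : Fin 3)
    (Y : Fin N → Fin 4 → ℕ) (hY : ∀ i j, Y i j ≤ 1) :
    expec n (fun W => (tauhat Y n l W - expec n (tauhat Y n l)) ^ 2) =
      (1 / 4) * (∑ j, (((N : ℝ) / ((N : ℝ) - 1)) * ((cnt1 Y j : ℝ) / N) *
        (1 - (cnt1 Y j : ℝ) / N)) / n j) - S2 Y l / N := by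
  classical
  have hNR : (N : ℝ) ≠ 0 := Nat.cast_ne_zero.2 (by omega)
  have hN1 : (N : ℝ) - 1 ≠ 0 := by
    have : (2 : ℝ) ≤ (N : ℝ) := by exact_mod_cast hN
    linarith
  have hnj : ∀ j, (n j : ℝ) ≠ 0 := fun j => Nat.cast_ne_zero.2 (by have := hn j; omega)
  set A := assignments N n with hA
  have hne : A.Nonempty := assign_nonempty N n hsum
  set K : ℝ := (A.card : ℝ) with hKdef
  have hK : K ≠ 0 := Nat.cast_ne_zero.2 (Finset.card_pos.2 hne).ne'
  -- cast lemmas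
  have hc : ∀ j, ((cnt1 Y j : ℕ) : ℝ) = ∑ i, (Y i j : ℝ) := by
    intro j
    unfold cnt1
    rw [Finset.card_filter]
    push_cast
    refine Finset.sum_congr rfl fun i _ => ?_
    rcases Nat.le_one_iff_eq_zero_or_eq_one.1 (hY i j) with h | h <;> simp [h]
  have hmdiag : ∀ j, ∑ i, (Y i j : ℝ) * (Y i j : ℝ) = ((cnt1 Y j : ℕ) : ℝ) := by
    intro j
    rw [hc j]
    refine Finset.sum_congr rfl fun i _ => ?_
    rcases Nat.le_one_iff_eq_zero_or_eq_one.1 (hY i j) with h | h <;> simp [h]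
  -- tauhat expansion
  have htau : ∀ W : Fin N → Fin 4, tauhat Y n l W
      = ∑ j, (H l j : ℝ) / (2 * n j) * ∑ i, (Y i j : ℝ) * Ind W i j := by
    intro W
    unfold tauhat phat
    rw [Finset.mul_sum]
    refine Finset.sum_congr rfl fun j _ => ?_
    rw [Finset.sum_filter]
    rw [show (∑ i, if W i = j then (Y i j : ℝ) else 0) = ∑ i, (Y i j : ℝ) * Ind W i j from
      Finset.sum_congr rfl fun i _ => by unfold Ind; split_ifs <;> ring]
    ring
  -- first moment
  have h1 : ∑ W ∈ A, tauhat Y n l W = K * taubar Y l := by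
    calc ∑ W ∈ A, tauhat Y n l W
        = ∑ W ∈ A, ∑ j, (H l j : ℝ) / (2 * n j) * ∑ i, (Y i j : ℝ) * Ind W i j :=
          Finset.sum_congr rfl fun W _ => htau W
      _ = ∑ j, ∑ W ∈ A, (H l j : ℝ) / (2 * n j) * ∑ i, (Y i j : ℝ) * Ind W i j :=
          Finset.sum_comm
      _ = ∑ j, (H l j : ℝ) / (2 * n j) * ((∑ i, (Y i j : ℝ)) * ((n j : ℝ) * K / N)) := by
          refine Finset.sum_congr rfl fun j _ => ?_
          rw [← Finset.mul_sum]
          congr 1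
          rw [Finset.sum_comm, Finset.sum_mul]
          refine Finset.sum_congr rfl fun i _ => ?_
          rw [← Finset.mul_sum, mom1 (n := n) (by omega) i j, ← hA, ← hKdef]
      _ = ∑ j, K * ((1 / 2) * ((H l j : ℝ) * ((cnt1 Y j : ℝ) / N))) := by
          refine Finset.sum_congr rfl fun j _ => ?_
          rw [hc j]
          have h1 := hnj j
          field_simp
      _ = K * taubar Y l := by
          unfold taubar
          rw [Finset.mul_sum, Finset.mul_sum]
  -- diagonal moment
  have momd : ∀ (i : Fin N) (j j' : Fin 4), ∑ W ∈ A, Ind W i j * Ind W i j'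
      = if j = j' then (n j : ℝ) * K / N else 0 := by
    intro i j j'
    rw [Finset.sum_congr rfl fun W _ => Ind_mul_self W i j j']
    by_cases hjj : j = j'
    · simp only [if_pos hjj]
      subst hjj
      rw [mom1 (n := n) (by omega) i j, ← hA, ← hKdef]
    · simp only [if_neg hjj, Finset.sum_const, smul_zero]
  -- joint indicator moments
  have hP : ∀ (j j' : Fin 4) (i i' : Fin N), ∑ W ∈ A, Ind W i j * Ind W i' j'
      = if i = i' then (if j = j' then (n j : ℝ) * K / N else 0)
        else (n j : ℝ) * ((n j' : ℝ) - if j = j' then 1 else 0) * K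
          / ((N : ℝ) * ((N : ℝ) - 1)) := by
    intro j j' i i'
    by_cases hii : i = i'
    · rw [if_pos hii]
      subst hii
      exact momd i j j'
    · rw [if_neg hii, mom2 (n := n) hN hii j j', ← hA, ← hKdef]
  -- second moment of tauhat (simplified per-term form)
  have hterm : ∀ j j' : Fin 4,
      ∑ W ∈ A, ((H l j : ℝ) / (2 * n j) * ∑ i, (Y i j : ℝ) * Ind W i j)
        * ((H l j' : ℝ) / (2 * n j') * ∑ i, (Y i j' : ℝ) * Ind W i j')
      = K * ((H l j : ℝ) * (H l j') *
            (((∑ i, (Y i j : ℝ)) * (∑ i, (Y i j' : ℝ)) - ∑ i, (Y i j : ℝ) * (Y i j' : ℝ))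
              / (4 * N * ((N : ℝ) - 1)))
          + (if j = j' then (H l j : ℝ) * (H l j') *
              (((∑ i, (Y i j : ℝ) * (Y i j' : ℝ)) * N - (∑ i, (Y i j : ℝ)) * (∑ i, (Y i j' : ℝ)))
                / (4 * n j * N * ((N : ℝ) - 1))) else 0)) := by
    intro j j'
    have step1 : ∀ W : Fin N → Fin 4,
        ((H l j : ℝ) / (2 * n j) * ∑ i, (Y i j : ℝ) * Ind W i j)
          * ((H l j' : ℝ) / (2 * n j') * ∑ i, (Y i j' : ℝ) * Ind W i j')
        = ((H l j : ℝ) / (2 * n j) * ((H l j' : ℝ) / (2 * n j'))) *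
            ∑ i, ∑ i', ((Y i j : ℝ) * (Y i' j' : ℝ)) * (Ind W i j * Ind W i' j') := by
      intro W
      calc ((H l j : ℝ) / (2 * n j) * ∑ i, (Y i j : ℝ) * Ind W i j)
            * ((H l j' : ℝ) / (2 * n j') * ∑ i, (Y i j' : ℝ) * Ind W i j')
          = ((H l j : ℝ) / (2 * n j) * ((H l j' : ℝ) / (2 * n j'))) *
              ((∑ i, (Y i j : ℝ) * Ind W i j) * (∑ i', (Y i' j' : ℝ) * Ind W i' j')) := by
            ring
        _ = ((H l j : ℝ) / (2 * n j) * ((H l j' : ℝ) / (2 * n j'))) *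
              ∑ i, ∑ i', ((Y i j : ℝ) * Ind W i j) * ((Y i' j' : ℝ) * Ind W i' j') := by
            rw [Finset.sum_mul_sum]
        _ = ((H l j : ℝ) / (2 * n j) * ((H l j' : ℝ) / (2 * n j'))) *
              ∑ i, ∑ i', ((Y i j : ℝ) * (Y i' j' : ℝ)) * (Ind W i j * Ind W i' j') := by
            congr 1
            exact Finset.sum_congr rfl fun i _ => Finset.sum_congr rfl fun i' _ => by ring
    have step2 : ∑ W ∈ A, ((H l j : ℝ) / (2 * n j) * ∑ i, (Y i j : ℝ) * Ind W i j)
        * ((H l j' : ℝ) / (2 * n j') * ∑ i, (Y i j' : ℝ) * Ind W i j')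
        = ((H l j : ℝ) / (2 * n j) * ((H l j' : ℝ) / (2 * n j'))) *
            (((∑ i, ∑ i', (Y i j : ℝ) * (Y i' j' : ℝ))
                * ((n j : ℝ) * ((n j' : ℝ) - if j = j' then 1 else 0) * K
                    / ((N : ℝ) * ((N : ℝ) - 1)))
              + (∑ i, (Y i j : ℝ) * (Y i j' : ℝ)) *
                ((if j = j' then (n j : ℝ) * K / N else 0)
                  - (n j : ℝ) * ((n j' : ℝ) - if j = j' then 1 else 0) * K
                      / ((N : ℝ) * ((N : ℝ) - 1))))) := by
      rw [Finset.sum_congr rfl fun W _ => step1 W, ← Finset.mul_sum]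
      congr 1
      rw [show (∑ W ∈ A, ∑ i, ∑ i', ((Y i j : ℝ) * (Y i' j' : ℝ)) * (Ind W i j * Ind W i' j'))
          = ∑ i, ∑ i', ((Y i j : ℝ) * (Y i' j' : ℝ)) *
              (if i = i' then (if j = j' then (n j : ℝ) * K / N else 0)
                else (n j : ℝ) * ((n j' : ℝ) - if j = j' then 1 else 0) * K
                  / ((N : ℝ) * ((N : ℝ) - 1))) from by
        rw [Finset.sum_comm]
        refine Finset.sum_congr rfl fun i _ => ?_
        rw [Finset.sum_comm]
        refine Finset.sum_congr rfl fun i' _ => ?_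
        rw [← Finset.mul_sum, hP j j' i i']]
      exact sum_if_diag (fun i i' => (Y i j : ℝ) * (Y i' j' : ℝ)) _ _
    rw [step2, ← Finset.sum_mul_sum]
    by_cases hjj : j = j'
    · simp only [if_pos hjj]
      subst hjj
      have hnjj := hnj j
      field_simp
      ring
    · simp only [if_neg hjj]
      have hnjj := hnj j
      have hnjj' := hnj j'
      field_simp
      ring
  have h2 : ∑ W ∈ A, (tauhat Y n l W) ^ 2
      = K * ∑ j, ∑ j', ((H l j : ℝ) * (H l j') *
            (((∑ i, (Y i j : ℝ)) * (∑ i, (Y i j' : ℝ)) - ∑ i, (Y i j : ℝ) * (Y i j' : ℝ))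
              / (4 * N * ((N : ℝ) - 1)))
          + (if j = j' then (H l j : ℝ) * (H l j') *
              (((∑ i, (Y i j : ℝ) * (Y i j' : ℝ)) * N - (∑ i, (Y i j : ℝ)) * (∑ i, (Y i j' : ℝ)))
                / (4 * n j * N * ((N : ℝ) - 1))) else 0)) := by
    calc ∑ W ∈ A, (tauhat Y n l W) ^ 2
        = ∑ W ∈ A, ∑ j, ∑ j',
            ((H l j : ℝ) / (2 * n j) * ∑ i, (Y i j : ℝ) * Ind W i j)
              * ((H l j' : ℝ) / (2 * n j') * ∑ i, (Y i j' : ℝ) * Ind W i j') := by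
          refine Finset.sum_congr rfl fun W _ => ?_
          rw [htau W, sq, Finset.sum_mul_sum]
      _ = ∑ j, ∑ j', ∑ W ∈ A,
            ((H l j : ℝ) / (2 * n j) * ∑ i, (Y i j : ℝ) * Ind W i j)
              * ((H l j' : ℝ) / (2 * n j') * ∑ i, (Y i j' : ℝ) * Ind W i j') := by
          rw [Finset.sum_comm]
          exact Finset.sum_congr rfl fun j _ => Finset.sum_comm
      _ = ∑ j, ∑ j', K * ((H l j : ℝ) * (H l j') *
            (((∑ i, (Y i j : ℝ)) * (∑ i, (Y i j' : ℝ)) - ∑ i, (Y i j : ℝ) * (Y i j' : ℝ))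
              / (4 * N * ((N : ℝ) - 1)))
          + (if j = j' then (H l j : ℝ) * (H l j') *
              (((∑ i, (Y i j : ℝ) * (Y i j' : ℝ)) * N - (∑ i, (Y i j : ℝ)) * (∑ i, (Y i j' : ℝ)))
                / (4 * n j * N * ((N : ℝ) - 1))) else 0)) :=
          Finset.sum_congr rfl fun j _ => Finset.sum_congr rfl fun j' _ => hterm j j'
      _ = _ := by
          rw [Finset.mul_sum]
          exact Finset.sum_congr rfl fun j _ => (Finset.mul_sum _ _ _).symm
  -- squares of H entries
  have hH2 : ∀ j, (H l j : ℝ) * (H l j) = 1 := by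
    intro j
    fin_cases l <;> fin_cases j <;> norm_num [H]
  -- expectation of tauhat
  have h3 : expec n (tauhat Y n l) = taubar Y l := by
    unfold expec
    rw [← hA, h1, ← hKdef, mul_comm, mul_div_assoc, div_self hK, mul_one]
  -- variance reduction
  have h4 : expec n (fun W => (tauhat Y n l W - expec n (tauhat Y n l)) ^ 2)
      = (∑ W ∈ A, (tauhat Y n l W) ^ 2) / K - (taubar Y l) ^ 2 := by
    rw [h3]
    unfold expec
    rw [← hA, ← hKdef]
    have hexp : ∑ W ∈ A, (tauhat Y n l W - taubar Y l) ^ 2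
        = (∑ W ∈ A, (tauhat Y n l W) ^ 2)
          - 2 * taubar Y l * (∑ W ∈ A, tauhat Y n l W) + K * (taubar Y l) ^ 2 := by
      rw [Finset.sum_congr rfl (fun W _ => show (tauhat Y n l W - taubar Y l) ^ 2
          = (tauhat Y n l W) ^ 2 - 2 * taubar Y l * tauhat Y n l W + (taubar Y l) ^ 2 by ring)]
      rw [Finset.sum_add_distrib, Finset.sum_sub_distrib, ← Finset.mul_sum,
        Finset.sum_const, nsmul_eq_mul, ← hKdef]
    rw [hexp, h1]
    field_simp
    ring
  -- S2 reduction
  have hsumtau : ∑ i, tauInd Y l i = (N : ℝ) * taubar Y l := by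
    unfold tauInd
    calc ∑ i : Fin N, (1 / 2) * ∑ j, (H l j : ℝ) * (Y i j : ℝ)
        = (1 / 2) * ∑ i : Fin N, ∑ j, (H l j : ℝ) * (Y i j : ℝ) := by
          rw [Finset.mul_sum]
      _ = (1 / 2) * ∑ j, ∑ i : Fin N, (H l j : ℝ) * (Y i j : ℝ) := by
          rw [Finset.sum_comm]
      _ = (1 / 2) * ∑ j, (H l j : ℝ) * ((cnt1 Y j : ℝ)) := by
          congr 1
          refine Finset.sum_congr rfl fun j _ => ?_
          rw [← Finset.mul_sum, ← hc j]
      _ = (N : ℝ) * taubar Y l := by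
          unfold taubar
          rw [Finset.mul_sum, Finset.mul_sum, Finset.mul_sum]
          refine Finset.sum_congr rfl fun j _ => ?_
          field_simp
  have hsumtausq : ∑ i, (tauInd Y l i) ^ 2
      = (1 / 4) * ∑ j, ∑ j', (H l j : ℝ) * (H l j') * (∑ i, (Y i j : ℝ) * (Y i j' : ℝ)) := by
    have hper : ∀ i, (tauInd Y l i) ^ 2
        = (1 / 4) * ∑ j, ∑ j', ((H l j : ℝ) * (Y i j : ℝ)) * ((H l j' : ℝ) * (Y i j' : ℝ)) := by
      intro i
      unfold tauInd
      rw [← Finset.sum_mul_sum]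
      ring
    rw [Finset.sum_congr rfl fun i _ => hper i, ← Finset.mul_sum]
    congr 1
    rw [Finset.sum_comm]
    refine Finset.sum_congr rfl fun j _ => ?_
    rw [Finset.sum_comm]
    refine Finset.sum_congr rfl fun j' _ => ?_
    rw [Finset.mul_sum]
    refine Finset.sum_congr rfl fun i _ => ?_
    ring
  have h5 : ∑ i, (tauInd Y l i - taubar Y l) ^ 2
      = (1 / 4) * (∑ j, ∑ j', (H l j : ℝ) * (H l j') * (∑ i, (Y i j : ℝ) * (Y i j' : ℝ)))
        - (N : ℝ) * (taubar Y l) ^ 2 := by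
    rw [Finset.sum_congr rfl (fun i _ => show (tauInd Y l i - taubar Y l) ^ 2
        = (tauInd Y l i) ^ 2 - 2 * taubar Y l * tauInd Y l i + (taubar Y l) ^ 2 by ring)]
    rw [Finset.sum_add_distrib, Finset.sum_sub_distrib, ← Finset.mul_sum,
      Finset.sum_const, nsmul_eq_mul, card_univ, Fintype.card_fin, hsumtau, hsumtausq]
    ring
  -- split the double sum from h2
  have hsplit : (∑ j, ∑ j', ((H l j : ℝ) * (H l j') *
            (((∑ i, (Y i j : ℝ)) * (∑ i, (Y i j' : ℝ)) - ∑ i, (Y i j : ℝ) * (Y i j' : ℝ))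
              / (4 * N * ((N : ℝ) - 1)))
          + (if j = j' then (H l j : ℝ) * (H l j') *
              (((∑ i, (Y i j : ℝ) * (Y i j' : ℝ)) * N - (∑ i, (Y i j : ℝ)) * (∑ i, (Y i j' : ℝ)))
                / (4 * n j * N * ((N : ℝ) - 1))) else 0)))
      = (1 / (4 * N * ((N : ℝ) - 1))) *
          ((∑ j, (H l j : ℝ) * ∑ i, (Y i j : ℝ)) ^ 2
            - ∑ j, ∑ j', (H l j : ℝ) * (H l j') * (∑ i, (Y i j : ℝ) * (Y i j' : ℝ)))
        + ∑ j, ((∑ i, (Y i j : ℝ) * (Y i j : ℝ)) * N - (∑ i, (Y i j : ℝ)) * (∑ i, (Y i j : ℝ)))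
            / (4 * n j * N * ((N : ℝ) - 1)) := by
    rw [Finset.sum_congr rfl fun j (_ : j ∈ univ) => Finset.sum_add_distrib,
      Finset.sum_add_distrib]
    congr 1
    · calc ∑ j, ∑ j', ((H l j : ℝ) * (H l j') *
              (((∑ i, (Y i j : ℝ)) * (∑ i, (Y i j' : ℝ)) - ∑ i, (Y i j : ℝ) * (Y i j' : ℝ))
                / (4 * N * ((N : ℝ) - 1))))
          = ∑ j, ∑ j', ((1 / (4 * N * ((N : ℝ) - 1))) *
              (((H l j : ℝ) * ∑ i, (Y i j : ℝ)) * ((H l j' : ℝ) * ∑ i, (Y i j' : ℝ))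
                - (H l j : ℝ) * (H l j') * (∑ i, (Y i j : ℝ) * (Y i j' : ℝ)))) :=
            Finset.sum_congr rfl fun j _ => Finset.sum_congr rfl fun j' _ => by ring
        _ = (1 / (4 * N * ((N : ℝ) - 1))) * ∑ j, ∑ j',
              (((H l j : ℝ) * ∑ i, (Y i j : ℝ)) * ((H l j' : ℝ) * ∑ i, (Y i j' : ℝ))
                - (H l j : ℝ) * (H l j') * (∑ i, (Y i j : ℝ) * (Y i j' : ℝ))) := by
            rw [Finset.mul_sum]
            exact Finset.sum_congr rfl fun j _ => (Finset.mul_sum _ _ _).symm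
        _ = (1 / (4 * N * ((N : ℝ) - 1))) *
              ((∑ j, ∑ j', ((H l j : ℝ) * ∑ i, (Y i j : ℝ)) * ((H l j' : ℝ) * ∑ i, (Y i j' : ℝ)))
                - ∑ j, ∑ j', (H l j : ℝ) * (H l j') * (∑ i, (Y i j : ℝ) * (Y i j' : ℝ))) := by
            congr 1
            rw [← Finset.sum_sub_distrib]
            exact Finset.sum_congr rfl fun j _ => Finset.sum_sub_distrib _ _
        _ = (1 / (4 * N * ((N : ℝ) - 1))) *
              ((∑ j, (H l j : ℝ) * ∑ i, (Y i j : ℝ)) ^ 2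
                - ∑ j, ∑ j', (H l j : ℝ) * (H l j') * (∑ i, (Y i j : ℝ) * (Y i j' : ℝ))) := by
            rw [← Finset.sum_mul_sum, sq]
    · refine Finset.sum_congr rfl fun j _ => ?_
      rw [Finset.sum_ite_eq univ j (fun j' => (H l j : ℝ) * (H l j') *
        (((∑ i, (Y i j : ℝ) * (Y i j' : ℝ)) * N - (∑ i, (Y i j : ℝ)) * (∑ i, (Y i j' : ℝ)))
          / (4 * n j * N * ((N : ℝ) - 1))))]
      rw [if_pos (mem_univ j), hH2 j, one_mul]
  -- S in terms of taubar
  have hS : ∑ j, (H l j : ℝ) * ∑ i, (Y i j : ℝ) = 2 * (N : ℝ) * taubar Y l := by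
    have key : ∀ j ∈ (univ : Finset (Fin 4)), (H l j : ℝ) * ∑ i, (Y i j : ℝ)
        = 2 * (N : ℝ) * ((1 / 2) * ((H l j : ℝ) * ((cnt1 Y j : ℝ) / N))) := by
      intro j _
      rw [← hc j]
      field_simp
    rw [Finset.sum_congr rfl key]
    unfold taubar
    rw [Finset.mul_sum, Finset.mul_sum]
  -- the diagonal sum
  have hDg : ∑ j, ((∑ i, (Y i j : ℝ) * (Y i j : ℝ)) * N - (∑ i, (Y i j : ℝ)) * (∑ i, (Y i j : ℝ)))
        / (4 * n j * N * ((N : ℝ) - 1))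
      = (1 / 4) * (∑ j, (((N : ℝ) / ((N : ℝ) - 1)) * ((cnt1 Y j : ℝ) / N) *
          (1 - (cnt1 Y j : ℝ) / N)) / n j) := by
    rw [Finset.mul_sum]
    refine Finset.sum_congr rfl fun j _ => ?_
    rw [hmdiag j, ← hc j]
    have := hnj j
    field_simp
  -- final assembly
  rw [h4, h2, mul_comm K, mul_div_assoc, div_self hK, mul_one, hsplit, hDg, hS]
  unfold S2
  rw [h5]
  field_simp
  ring
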